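/- Let T be a tree on vertex set [n] and B ⊆ [n] with |B| = n - 1. Then det(L^q_T[B|B]) = 1, where L^q_T[B|B] is the principal submatrix of the q-Laplacian L^q_T = I + q^2(D-I) - qA obtained by deleting the row and column of the single vertex outside B. -/

import Mathlib

open Polynomial

noncomputable def qLap {n : ℕ} (G : SimpleGraph (Fin n)) [DecidableRel G.Adj]
    {R : Type*} [CommRing R] (q : R) : Matrix (Fin n) (Fin n) R :=
  Matrix.of fun i j =>
    if i = j then 1 + q ^ 2 * ((G.degree i : R) - 1)
    else if G.Adj i j then -q else 0

open SimpleGraph in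
/-- In a tree, adjacent vertices have different distance to any vertex `r`. -/
private lemma tree_dist_adj_ne {V : Type*} {G : SimpleGraph V} (hG : G.IsTree) {r a b : V}
    (hab : G.Adj a b) : G.dist a r ≠ G.dist b r := by
  classical
  intro h
  obtain ⟨pa, hpa, hla⟩ := hG.isConnected.exists_path_of_dist a r
  obtain ⟨pb, hpb, hlb⟩ := hG.isConnected.exists_path_of_dist b r
  have hbs : b ∉ pa.support := by
    intro hmem
    have hsplit := congrArg Walk.length (pa.take_spec hmem)
    rw [Walk.length_append] at hsplit
    have h1 : (pa.takeUntil b hmem).length ≠ 0 :=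
      fun h0 => hab.ne (Walk.eq_of_length_eq_zero h0)
    have h2 : G.dist b r ≤ (pa.dropUntil b hmem).length := SimpleGraph.dist_le _
    omega
  have hpath : (pa.cons hab.symm).IsPath := hpa.cons hbs
  have huniq := (hG.existsUnique_path b r).unique hpath hpb
  have hlen := congrArg Walk.length huniq
  rw [Walk.length_cons] at hlen
  omega

open SimpleGraph in
/-- In a connected graph, every vertex `v ≠ r` has a neighbor strictly closer to `r`. -/
private lemma exists_parent {V : Type*} {G : SimpleGraph V} (hG : G.IsTree) {r v : V}
    (hv : v ≠ r) : ∃ p, G.Adj v p ∧ G.dist p r + 1 = G.dist v r := by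
  obtain ⟨w, hw, hl⟩ := hG.isConnected.exists_path_of_dist v r
  obtain ⟨u, huv, q, rfl⟩ := Walk.exists_eq_cons_of_ne hv w
  refine ⟨u, huv, ?_⟩
  have h1 : G.dist u r ≤ q.length := SimpleGraph.dist_le q
  have h2 : G.dist v r ≤ G.dist v u + G.dist u r := hG.isConnected.dist_triangle
  have h3 : G.dist v u = 1 := SimpleGraph.dist_eq_one_iff_adj.2 huv
  rw [Walk.length_cons] at hl
  omega

open SimpleGraph in
/-- In a tree, the closer neighbor is unique. -/
private lemma parent_unique {V : Type*} {G : SimpleGraph V} (hG : G.IsTree) {r v p p' : V}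
    (h1 : G.Adj v p) (h2 : G.Adj v p')
    (hd1 : G.dist p r + 1 = G.dist v r) (hd2 : G.dist p' r + 1 = G.dist v r) : p = p' := by
  classical
  obtain ⟨w1, hw1, hl1⟩ := hG.isConnected.exists_path_of_dist p r
  obtain ⟨w2, hw2, hl2⟩ := hG.isConnected.exists_path_of_dist p' r
  have hv1 : v ∉ w1.support := by
    intro hmem
    have hsplit := congrArg Walk.length (w1.take_spec hmem)
    rw [Walk.length_append] at hsplit
    have hle := SimpleGraph.dist_le (w1.dropUntil v hmem)
    have hne : (w1.takeUntil v hmem).length ≠ 0 :=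
      fun h0 => h1.ne' (Walk.eq_of_length_eq_zero h0)
    omega
  have hv2 : v ∉ w2.support := by
    intro hmem
    have hsplit := congrArg Walk.length (w2.take_spec hmem)
    rw [Walk.length_append] at hsplit
    have hle := SimpleGraph.dist_le (w2.dropUntil v hmem)
    have hne : (w2.takeUntil v hmem).length ≠ 0 :=
      fun h0 => h2.ne' (Walk.eq_of_length_eq_zero h0)
    omega
  have huniq := (hG.existsUnique_path v r).unique ((hw1.cons hv1) : (w1.cons h1).IsPath)
    ((hw2.cons hv2) : (w2.cons h2).IsPath)
  have := congrArg (fun w => Walk.getVert w 1) huniq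
  simpa [Walk.getVert_cons] using this

open SimpleGraph in
/-- In a tree, the distances of adjacent vertices to `r` differ by exactly one. -/
private lemma adj_dist_cases {V : Type*} {G : SimpleGraph V} (hG : G.IsTree) {r a b : V}
    (hab : G.Adj a b) :
    G.dist b r + 1 = G.dist a r ∨ G.dist a r + 1 = G.dist b r := by
  have hne := tree_dist_adj_ne hG (r := r) hab
  have t1 : G.dist a r ≤ G.dist a b + G.dist b r := hG.isConnected.dist_triangle
  have t2 : G.dist b r ≤ G.dist b a + G.dist a r := hG.isConnected.dist_triangle
  have e1 : G.dist a b = 1 := SimpleGraph.dist_eq_one_iff_adj.2 hab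
  have e2 : G.dist b a = 1 := SimpleGraph.dist_eq_one_iff_adj.2 hab.symm
  omega

/-- For a tree `T` on `[n]` and `B ⊆ [n]` with `|B| = n - 1`, the principal
minor `det(L^q_T[B|B])` equals `1` in `ℝ[q]`. -/
theorem qLap_principal_minor_card_pred {n : ℕ} (G : SimpleGraph (Fin n))
    [DecidableRel G.Adj] (hG : G.IsTree) (B : Finset (Fin n))
    (hB : B.card = n - 1) :
    ((qLap G (X : Polynomial ℝ)).submatrix
        (fun i : B => (i : Fin n)) (fun i : B => (i : Fin n))).det = 1 := by
  classical
  obtain ⟨v0⟩ := hG.isConnected.nonempty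
  have hn : 1 ≤ n := by
    by_contra h
    exact absurd (Fin.pos v0) (by omega)
  -- the unique vertex outside `B`
  have hcompl : Bᶜ.card = 1 := by
    rw [Finset.card_compl, hB, Fintype.card_fin]; omega
  obtain ⟨r, hr⟩ := Finset.card_eq_one.mp hcompl
  have hmem : ∀ v : Fin n, v ∈ B ↔ v ≠ r := by
    intro v
    rw [← Finset.notMem_compl, hr, Finset.mem_singleton]
  set d : Fin n → ℕ := fun v => G.dist v r with hd
  -- the parent function
  let par : Fin n → Fin n := fun v =>
    if h : v = r then v else Classical.choose (exists_parent hG h)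
  have par_r : par r = r := dif_pos rfl
  have par_adj : ∀ v : Fin n, v ≠ r → G.Adj v (par v) := by
    intro v h
    simp only [par, dif_neg h]
    exact (Classical.choose_spec (exists_parent hG h)).1
  have par_dist : ∀ v : Fin n, v ≠ r → d (par v) + 1 = d v := by
    intro v h
    simp only [par, dif_neg h, hd]
    exact (Classical.choose_spec (exists_parent hG h)).2
  have d_r : d r = 0 := SimpleGraph.dist_self
  have par_uniq : ∀ v w : Fin n, G.Adj v w → d w + 1 = d v → par v = w := by
    intro v w hvw hdw
    have hv : v ≠ r := by
      intro h; rw [h, d_r] at hdw; omega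
    exact parent_unique hG (par_adj v hv) hvw (par_dist v hv) hdw
  have par_ne : ∀ v : Fin n, v ≠ r → par v ≠ v := fun v h => (par_adj v h).ne'
  -- counting children
  have childcard : ∀ i : Fin n, i ≠ r →
      (Finset.univ.filter fun k => par k = i).card + 1 = G.degree i := by
    intro i hi
    have hnbr : G.neighborFinset i =
        insert (par i) (Finset.univ.filter fun k => par k = i) := by
      ext k
      simp only [SimpleGraph.mem_neighborFinset, Finset.mem_insert, Finset.mem_filter,
        Finset.mem_univ, true_and]
      constructor
      · intro hik
        rcases adj_dist_cases hG (r := r) hik with h | h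
        · exact Or.inl (par_uniq i k hik h).symm
        · exact Or.inr (par_uniq k i hik.symm h)
      · rintro (rfl | h)
        · exact par_adj i hi
        · have hk : k ≠ r := by
            intro e; rw [e, par_r] at h; exact hi h.symm
          exact (h ▸ par_adj k hk).symm
    have hdisj : par i ∉ Finset.univ.filter fun k => par k = i := by
      simp only [Finset.mem_filter, Finset.mem_univ, true_and]
      intro hpp
      by_cases hpr : par i = r
      · rw [hpr, par_r] at hpp; exact hi hpp.symm
      · have h1 := par_dist i hi
        have h2 := par_dist (par i) hpr
        rw [hpp] at h2; omega
    rw [SimpleGraph.degree, hnbr, Finset.card_insert_of_notMem hdisj]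
  -- the unipotent matrix
  let A : Matrix B B ℝ[X] :=
    Matrix.of fun i j => if par (i : Fin n) = (j : Fin n) then (-X : ℝ[X]) else 0
  let U : Matrix B B ℝ[X] := 1 + A
  have hcoe_ne : ∀ i : B, (i : Fin n) ≠ r := fun i => (hmem _).1 i.2
  have par_ne_self : ∀ i : B, par (i : Fin n) ≠ (i : Fin n) := fun i => par_ne _ (hcoe_ne i)
  -- the factorization
  have hprod : U.transpose * U = (qLap G (X : Polynomial ℝ)).submatrix
      (fun i : B => (i : Fin n)) (fun i : B => (i : Fin n)) := by
    ext i j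
    rw [Matrix.mul_apply]
    simp only [Matrix.transpose_apply, Matrix.submatrix_apply, qLap, Matrix.of_apply]
    by_cases hij : i = j
    · subst hij
      have hterm : ∀ k : B, U k i * U k i =
          (if k = i then 1 else 0) + (if par (k : Fin n) = (i : Fin n) then X ^ 2 else 0) := by
        intro k
        simp only [U, A, Matrix.add_apply, Matrix.one_apply, Matrix.of_apply]
        by_cases hk : k = i
        · subst hk
          simp [par_ne_self k]
        · have hk' : (k : Fin n) ≠ (i : Fin n) := fun e => hk (Subtype.ext e)
          by_cases hpk : par (k : Fin n) = (i : Fin n) <;> simp [hk, hpk] <;> ring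
      rw [Finset.sum_congr rfl (fun k _ => hterm k), Finset.sum_add_distrib,
        Fintype.sum_ite_eq' i (fun _ => (1 : ℝ[X]))]
      have hsum : (∑ k : B, if par (k : Fin n) = (i : Fin n) then (X : ℝ[X]) ^ 2 else 0)
          = ((Finset.univ.filter fun k => par k = (i : Fin n)).card : ℝ[X]) * X ^ 2 := by
        rw [Finset.sum_coe_sort B (fun k => if par k = (i : Fin n) then (X : ℝ[X]) ^ 2 else 0)]
        rw [Finset.sum_subset (Finset.subset_univ B)]
        · rw [← Finset.sum_filter, Finset.sum_const, nsmul_eq_mul]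
        · intro k _ hk
          have : k = r := by
            by_contra h; exact hk ((hmem k).2 h)
          subst this
          rw [par_r, if_neg (Ne.symm (hcoe_ne i))]
      rw [hsum]
      have hcast : ((G.degree (i : Fin n) : ℝ[X])) =
          ((Finset.univ.filter fun k => par k = (i : Fin n)).card : ℝ[X]) + 1 := by
        rw [← childcard _ (hcoe_ne i)]; push_cast; ring
      rw [if_pos rfl, hcast]; ring
    · have hij' : (i : Fin n) ≠ (j : Fin n) := fun e => hij (Subtype.ext e)
      have hterm : ∀ k : B, U k i * U k j =
          (if k = i then (if par (i : Fin n) = (j : Fin n) then -X else 0) else 0) +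
          (if k = j then (if par (j : Fin n) = (i : Fin n) then -X else 0) else 0) := by
        intro k
        simp only [U, A, Matrix.add_apply, Matrix.one_apply, Matrix.of_apply]
        by_cases hk : k = i
        · subst hk
          simp [hij, par_ne_self k, hij']
        · by_cases hk2 : k = j
          · subst hk2
            have : (k : Fin n) ≠ (i : Fin n) := fun e => hk (Subtype.ext e)
            simp [hk, this, par_ne_self k]
          · have h1 : (k : Fin n) ≠ (i : Fin n) := fun e => hk (Subtype.ext e)
            have h2 : (k : Fin n) ≠ (j : Fin n) := fun e => hk2 (Subtype.ext e)
            have h3 : ¬(par (k : Fin n) = (i : Fin n) ∧ par (k : Fin n) = (j : Fin n)) := by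
              rintro ⟨e1, e2⟩; exact hij' (e1 ▸ e2 : (i : Fin n) = (j : Fin n))
            by_cases hpk : par (k : Fin n) = (i : Fin n)
            · have : par (k : Fin n) ≠ (j : Fin n) := fun e => h3 ⟨hpk, e⟩
              simp [hk, hk2, h1, h2, hpk, this, hij']
            · simp [hk, hk2, h1, h2, hpk]
      rw [Finset.sum_congr rfl (fun k _ => hterm k), Finset.sum_add_distrib,
        Fintype.sum_ite_eq' i, Fintype.sum_ite_eq' j, if_neg hij']
      by_cases hadj : G.Adj (i : Fin n) (j : Fin n)
      · rw [if_pos hadj]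
        rcases adj_dist_cases hG (r := r) hadj with h | h
        · have e1 : par (i : Fin n) = (j : Fin n) := par_uniq _ _ hadj h
          have e2 : par (j : Fin n) ≠ (i : Fin n) := by
            intro e
            have := par_dist (j : Fin n) (hcoe_ne j)
            rw [e] at this
            simp only [hd] at this
            omega
          rw [if_pos e1, if_neg e2, add_zero]
        · have e1 : par (j : Fin n) = (i : Fin n) := par_uniq _ _ hadj.symm h
          have e2 : par (i : Fin n) ≠ (j : Fin n) := by
            intro e
            have := par_dist (i : Fin n) (hcoe_ne i)
            rw [e] at this
            simp only [hd] at this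
            omega
          rw [if_pos e1, if_neg e2, zero_add]
      · rw [if_neg hadj]
        have e1 : par (i : Fin n) ≠ (j : Fin n) := by
          intro e; exact hadj (e ▸ par_adj _ (hcoe_ne i))
        have e2 : par (j : Fin n) ≠ (i : Fin n) := by
          intro e; exact hadj (e ▸ par_adj _ (hcoe_ne j)).symm
        rw [if_neg e1, if_neg e2, add_zero]
  -- the determinant of `U` is 1
  have hdetU : U.det = 1 := by
    let g : Fin B.card → ℕ := fun i => d ((B.equivFin.symm i : B) : Fin n)
    let σ := Tuple.sort g
    let e : Fin B.card ≃ B := σ.trans B.equivFin.symm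
    have hmono : Monotone (g ∘ σ) := Tuple.monotone_sort g
    rw [← Matrix.det_submatrix_equiv_self e U]
    have htri : (U.submatrix e e).BlockTriangular OrderDual.toDual := by
      intro i j hlt
      have hij : i < j := hlt
      have hne : e i ≠ e j := fun h => absurd (e.injective h) (ne_of_lt hij)
      have hd' : ¬ (par ((e i : B) : Fin n) = ((e j : B) : Fin n)) := by
        intro hpar
        have h1 := par_dist _ (hcoe_ne (e i))
        rw [hpar] at h1
        have h2 : g (σ i) ≤ g (σ j) := hmono (le_of_lt hij)
        simp only [g, e, Equiv.trans_apply] at h1 h2 ⊢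
        omega
      simp [Matrix.submatrix_apply, U, A, Matrix.one_apply, hne, hd']
    rw [Matrix.det_of_lowerTriangular _ htri]
    have hdiag : ∀ i, (U.submatrix e e) i i = 1 := by
      intro i
      simp [Matrix.submatrix_apply, U, A, Matrix.one_apply, par_ne_self (e i)]
    exact Finset.prod_eq_one fun x _ => hdiag x
  rw [← hprod, Matrix.det_mul, Matrix.det_transpose, hdetU, mul_one]
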